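/- arXiv:2411.00817 — 2 statements merged into one kernel-verified Lean document; each statement's English description precedes it below -/
import Mathlib

section
/- Let n ≥ 2, let Ω, Ω̃ ⊆ ℝⁿ be bounded, uniformly convex open domains with smooth boundary with defining functions h̃ and h respectively, and suppose the closure of Ω̃ is contained in the open unit ball B₁(0). Let (u, c) be a strictly convex solution of the second boundary value problem for the Lorentz mean curvature operator on (Ω, Ω̃). Then for every x ∈ ∂Ω, ⟨∇h(∇u(x)), ∇h̃(x)⟩ ≥ 0; that is, the boundary condition is oblique: the inner product of the inner unit normal ν(x) = ∇h̃(x) of Ω with the vector β(x) = ∇h(∇u(x)) is nonnegative. -/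
noncomputable section
open MeasureTheory
open scoped RealInnerProductSpace
open Set Filter Topology

variable {n : ℕ}
local notation "E" => EuclideanSpace ℝ (Fin n)

lemma my_inner_grad (f : E → ℝ) (x v : E) : ⟪gradient f x, v⟫ = fderiv ℝ f x v :=
  InnerProductSpace.toDual_symm_apply

lemma my_line_hasDerivAt {G : Type*} [NormedAddCommGroup G] [NormedSpace ℝ G]
    {f : E → G} (p v : E) (t : ℝ) (hf : DifferentiableAt ℝ f (p + t • v)) :
    HasDerivAt (fun s : ℝ => f (p + s • v)) (fderiv ℝ f (p + t • v) v) t := by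
  have hline : HasDerivAt (fun s : ℝ => p + s • v) v t := by
    simpa using ((hasDerivAt_id t).smul_const v).const_add p
  simpa [Function.comp_def] using hf.hasFDerivAt.comp_hasDerivAt t hline

lemma my_contDiff_gradient {f : E → ℝ} (hf : ContDiff ℝ (⊤ : ℕ∞) f) :
    ContDiff ℝ (⊤ : ℕ∞) (gradient f) := by
  have h1 : ContDiff ℝ (⊤ : ℕ∞) (fderiv ℝ f) := hf.fderiv_right (by exact_mod_cast le_top)
  exact (InnerProductSpace.toDual ℝ E).symm.contDiff.comp h1

lemma my_contDiffOn_gradient {f : E → ℝ} {U : Set E} (hU : IsOpen U)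
    (hf : ContDiffOn ℝ (⊤ : ℕ∞) f U) : ContDiffOn ℝ (⊤ : ℕ∞) (gradient f) U := by
  have h1 : ContDiffOn ℝ (⊤ : ℕ∞) (fderiv ℝ f) U :=
    hf.fderiv_of_isOpen hU (by exact_mod_cast le_top)
  exact (InnerProductSpace.toDual ℝ E).symm.contDiff.comp_contDiffOn h1

lemma my_tangent_le {f : E → ℝ} (hf : ContDiff ℝ (⊤ : ℕ∞) f)
    (hc : ∀ p ξ : E, ⟪ξ, fderiv ℝ (gradient f) p ξ⟫ ≤ 0) (p q : E) :
    f q ≤ f p + ⟪gradient f p, q - p⟫ := by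
  set v := q - p with hv
  have hgd : Differentiable ℝ (gradient f) := (my_contDiff_gradient hf).differentiable
    (by simp)
  set φ : ℝ → ℝ := fun s => f (p + s • v) with hφdef
  set χ : ℝ → ℝ := fun s => ⟪v, gradient f (p + s • v)⟫ with hχdef
  have hφ : ∀ t : ℝ, HasDerivAt φ (χ t) t := by
    intro t
    have := my_line_hasDerivAt (f := f) p v t (hf.differentiable (by simp) _)
    have e : fderiv ℝ f (p + t • v) v = χ t := by
      rw [← my_inner_grad]; exact real_inner_comm _ _
    rwa [e] at this
  have hχ : ∀ t : ℝ, HasDerivAt χ ⟪v, fderiv ℝ (gradient f) (p + t • v) v⟫ t := by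
    intro t
    have h1 : HasDerivAt (fun s : ℝ => gradient f (p + s • v))
        (fderiv ℝ (gradient f) (p + t • v) v) t :=
      my_line_hasDerivAt p v t (hgd _)
    exact ((innerSL ℝ v).hasFDerivAt.comp_hasDerivAt t h1)
  obtain ⟨c, hc1, hc2⟩ := exists_hasDerivAt_eq_slope φ χ one_pos
    (fun x _ => (hφ x).continuousAt.continuousWithinAt) (fun x _ => hφ x)
  have hχc : χ c ≤ χ 0 := by
    obtain ⟨c', _, hc2'⟩ := exists_hasDerivAt_eq_slope χ
      (fun t => ⟪v, fderiv ℝ (gradient f) (p + t • v) v⟫) hc1.1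
      (fun x _ => (hχ x).continuousAt.continuousWithinAt) (fun x _ => hχ x)
    have hle : (χ c - χ 0) / (c - 0) ≤ 0 := hc2' ▸ hc (p + c' • v) v
    have hcpos : (0:ℝ) < c := hc1.1
    rw [sub_zero] at hle
    rcases div_nonpos_iff.mp hle with ⟨_, h2⟩ | ⟨h1, _⟩
    · linarith
    · linarith
  have hφ1 : φ 1 = f q := by simp [hφdef, hv]
  have hφ0 : φ 0 = f p := by simp [hφdef]
  have hχ0 : χ 0 = ⟪gradient f p, q - p⟫ := by
    show ⟪v, gradient f (p + (0:ℝ) • v)⟫ = _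
    have e : p + (0:ℝ) • v = p := by simp
    rw [e, real_inner_comm, hv]
  have : f q - f p ≤ χ 0 := by
    have := hχc
    rw [hc2] at this
    simpa [hφ1, hφ0] using this
  linarith [this, hχ0.le, hχ0.ge]

lemma my_deriv_nonneg {φ : ℝ → ℝ} {a : ℝ} (hd : HasDerivAt φ a 0)
    (hev : ∀ᶠ t in 𝓝[>] (0:ℝ), φ 0 ≤ φ t) : 0 ≤ a := by
  have hs : Tendsto (slope φ 0) (𝓝[>] (0:ℝ)) (𝓝 a) :=
    (hasDerivAt_iff_tendsto_slope.1 hd).mono_left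
      (nhdsWithin_mono _ (fun t ht => ne_of_gt ht))
  refine ge_of_tendsto hs ?_
  filter_upwards [hev, self_mem_nhdsWithin] with t ht ht'
  rw [slope_def_field]
  exact div_nonneg (by linarith) (by simpa using (le_of_lt ht'))

lemma my_eventually_pos {φ : ℝ → ℝ} {a : ℝ} (hd : HasDerivAt φ a 0) (h0 : φ 0 = 0)
    (ha : 0 < a) : ∀ᶠ t in 𝓝[>] (0:ℝ), 0 < φ t := by
  have hs : Tendsto (slope φ 0) (𝓝[>] (0:ℝ)) (𝓝 a) :=
    (hasDerivAt_iff_tendsto_slope.1 hd).mono_left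
      (nhdsWithin_mono _ (fun t ht => ne_of_gt ht))
  have hev : ∀ᶠ t in 𝓝[>] (0:ℝ), 0 < slope φ 0 t := hs.eventually (Ioi_mem_nhds ha)
  filter_upwards [hev, self_mem_nhdsWithin] with t ht ht'
  have htpos : (0:ℝ) < t := by simpa using ht'
  have := mul_pos ht htpos
  rw [slope_def_field, h0, sub_zero, sub_zero, div_mul_cancel₀] at this
  · exact this
  · exact ne_of_gt htpos


noncomputable section
open MeasureTheory
open scoped RealInnerProductSpace


/-- The `i`-th standard basis vector of `ℝⁿ`. -/
def ev (n : ℕ) (i : Fin n) : EuclideanSpace ℝ (Fin n) := EuclideanSpace.single i 1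

/-- Lorentz mean curvature operator `M[u] x = ∑ i, ∂ᵢ (∂ᵢ u / √(1 - |∇u|²)) x`. -/
def MOp (n : ℕ) (u : EuclideanSpace ℝ (Fin n) → ℝ) (x : EuclideanSpace ℝ (Fin n)) : ℝ :=
  ∑ i : Fin n,
    fderiv ℝ (fun y => fderiv ℝ u y (ev n i) / Real.sqrt (1 - ‖gradient u y‖ ^ 2)) x (ev n i)

/-- Euclidean mean curvature operator `E[u] x = ∑ i, ∂ᵢ (∂ᵢ u / √(1 + |∇u|²)) x`. -/
def EOp (n : ℕ) (u : EuclideanSpace ℝ (Fin n) → ℝ) (x : EuclideanSpace ℝ (Fin n)) : ℝ :=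
  ∑ i : Fin n,
    fderiv ℝ (fun y => fderiv ℝ u y (ev n i) / Real.sqrt (1 + ‖gradient u y‖ ^ 2)) x (ev n i)

/-- `Ω` is a uniformly convex domain with smooth boundary, exhibited by the defining
function `h` with uniform concavity constant `θ`:  `h` is smooth, `Ω = {h > 0}`,
`|∇h| = 1` on `∂Ω`, and `⟨ξ, D²h(p) ξ⟩ ≤ -θ |ξ|²` for all `p, ξ`. -/
def IsUnifConvexDefFn (n : ℕ) (Ω : Set (EuclideanSpace ℝ (Fin n)))
    (h : EuclideanSpace ℝ (Fin n) → ℝ) (θ : ℝ) : Prop :=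
  ContDiff ℝ (⊤ : ℕ∞) h ∧ Ω = {p | 0 < h p} ∧
  (∀ p ∈ frontier Ω, ‖gradient h p‖ = 1) ∧ 0 < θ ∧
  ∀ p ξ : EuclideanSpace ℝ (Fin n), ⟪ξ, fderiv ℝ (gradient h) p ξ⟫ ≤ -θ * ‖ξ‖ ^ 2

/-- `u` is smooth on the closure of `Ω` (i.e. on an open neighbourhood of it). -/
def SmoothOnClosure (n : ℕ) (Ω : Set (EuclideanSpace ℝ (Fin n)))
    (u : EuclideanSpace ℝ (Fin n) → ℝ) : Prop :=
  ∃ U : Set (EuclideanSpace ℝ (Fin n)), IsOpen U ∧ closure Ω ⊆ U ∧ ContDiffOn ℝ (⊤ : ℕ∞) u U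

/-- `(u, c)` is a strictly convex solution of the second boundary value problem for the
Lorentz mean curvature operator on `(Ω, Ω')`: `u` is smooth up to the boundary, spacelike
(`|∇u| < 1`), has positive definite Hessian `D²u` on the closure of `Ω`, its gradient map
is a bijection from `Ω` onto `Ω'`, and `M[u] = c` on `Ω`. -/
def IsSol (n : ℕ) (Ω Ω' : Set (EuclideanSpace ℝ (Fin n)))
    (u : EuclideanSpace ℝ (Fin n) → ℝ) (c : ℝ) : Prop :=
  SmoothOnClosure n Ω u ∧
  (∀ x ∈ closure Ω, ‖gradient u x‖ < 1) ∧
  (∀ x ∈ closure Ω, ∀ ξ : EuclideanSpace ℝ (Fin n), ξ ≠ 0 →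
      0 < ⟪ξ, fderiv ℝ (gradient u) x ξ⟫) ∧
  Set.BijOn (gradient u) Ω Ω' ∧
  (∀ x ∈ Ω, MOp n u x = c)

/-- `(u, c)` is a strictly convex solution of the second boundary value problem for the
Euclidean mean curvature operator on `(Ω, Ω')`. -/
def IsSolE (n : ℕ) (Ω Ω' : Set (EuclideanSpace ℝ (Fin n)))
    (u : EuclideanSpace ℝ (Fin n) → ℝ) (c : ℝ) : Prop :=
  SmoothOnClosure n Ω u ∧
  (∀ x ∈ closure Ω, ∀ ξ : EuclideanSpace ℝ (Fin n), ξ ≠ 0 →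
      0 < ⟪ξ, fderiv ℝ (gradient u) x ξ⟫) ∧
  Set.BijOn (gradient u) Ω Ω' ∧
  (∀ x ∈ Ω, EOp n u x = c)

/-- `ut` is the Legendre transform of `u`: it is smooth up to the boundary of `Ω'`,
satisfies `ut (∇u x) = ⟨x, ∇u x⟩ - u x` and `∇ut (∇u x) = x` for `x ∈ Ω`. -/
def IsLegendre (n : ℕ) (Ω Ω' : Set (EuclideanSpace ℝ (Fin n)))
    (u ut : EuclideanSpace ℝ (Fin n) → ℝ) : Prop :=
  SmoothOnClosure n Ω' ut ∧
  (∀ x ∈ Ω, ut (gradient u x) = ⟪x, gradient u x⟫ - u x) ∧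
  (∀ x ∈ Ω, gradient ut (gradient u x) = x)

/-- The coefficient matrix `s_ij(p) = (δ_ij + pᵢpⱼ/(1 - |p|²)) / √(1 - |p|²)` of the
Lorentz mean curvature operator written in nondivergence form. -/
def sMat (n : ℕ) (p : EuclideanSpace ℝ (Fin n)) (i j : Fin n) : ℝ :=
  ((if i = j then (1 : ℝ) else 0) + p i * p j / (1 - ‖p‖ ^ 2)) / Real.sqrt (1 - ‖p‖ ^ 2)

/-- `Ω` has smooth boundary: it is the superlevel set of a smooth function whose
gradient does not vanish on the boundary. -/
def HasSmoothBoundary (n : ℕ) (Ω : Set (EuclideanSpace ℝ (Fin n))) : Prop :=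
  ∃ g : EuclideanSpace ℝ (Fin n) → ℝ, ContDiff ℝ (⊤ : ℕ∞) g ∧ Ω = {p | 0 < g p} ∧
    ∀ p ∈ frontier Ω, gradient g p ≠ 0

/-- `B(p) = Iₙ + p pᵀ / (v (1 + v))`, `v = √(1 - |p|²)`: the positive square root of the
inverse induced metric of a spacelike graph with gradient `p`. -/
def sqB (n : ℕ) (p : EuclideanSpace ℝ (Fin n)) : Matrix (Fin n) (Fin n) ℝ :=
  1 + (Real.sqrt (1 - ‖p‖ ^ 2) * (1 + Real.sqrt (1 - ‖p‖ ^ 2)))⁻¹ •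
      Matrix.of fun i j => p i * p j

/-- `B'(p) = Iₙ - p pᵀ / (1 + v)`, `v = √(1 - |p|²)`: the square root of the induced
metric of a spacelike graph with gradient `p`. -/
def sqBinv (n : ℕ) (p : EuclideanSpace ℝ (Fin n)) : Matrix (Fin n) (Fin n) ℝ :=
  1 - (1 + Real.sqrt (1 - ‖p‖ ^ 2))⁻¹ • Matrix.of fun i j => p i * p j

set_option maxHeartbeats 2000000 in
/-- Lemma 3.5, obliqueness.  For a strictly convex solution of the second
boundary value problem, `⟨β(x), ν(x)⟩ = ⟨∇h(∇u(x)), ∇h̃(x)⟩ ≥ 0` on `∂Ω`. -/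
theorem statement9 (n : ℕ) (hn : 2 ≤ n) (Ω Ω' : Set (EuclideanSpace ℝ (Fin n)))
    (g h : EuclideanSpace ℝ (Fin n) → ℝ) (θ₁ θ₂ : ℝ)
    (hΩb : Bornology.IsBounded Ω) (hΩ'b : Bornology.IsBounded Ω')
    (hΩ : IsUnifConvexDefFn n Ω g θ₁) (hΩ' : IsUnifConvexDefFn n Ω' h θ₂)
    (hsub : closure Ω' ⊆ Metric.ball (0 : EuclideanSpace ℝ (Fin n)) 1)
    (u : EuclideanSpace ℝ (Fin n) → ℝ) (c : ℝ) (hu : IsSol n Ω Ω' u c) :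
    ∀ x ∈ frontier Ω, 0 ≤ ⟪gradient h (gradient u x), gradient g x⟫ := by
  obtain ⟨hg_sm, hΩeq, hgnorm, hθ₁, hgconc⟩ := hΩ
  obtain ⟨hh_sm, hΩ'eq, hhnorm, hθ₂, hhconc⟩ := hΩ'
  obtain ⟨⟨U, hUopen, hUsub, huU⟩, hsp, hpos, hbij, hM⟩ := hu
  intro x hx
  have hgc0 : ∀ p ξ : EuclideanSpace ℝ (Fin n), ⟪ξ, fderiv ℝ (gradient g) p ξ⟫ ≤ 0 :=
    fun p ξ => (hgconc p ξ).trans (by nlinarith [sq_nonneg ‖ξ‖])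
  have hhc0 : ∀ p ξ : EuclideanSpace ℝ (Fin n), ⟪ξ, fderiv ℝ (gradient h) p ξ⟫ ≤ 0 :=
    fun p ξ => (hhconc p ξ).trans (by nlinarith [sq_nonneg ‖ξ‖])
  have htg := my_tangent_le hg_sm hgc0
  have hth := my_tangent_le hh_sm hhc0
  have hΩopen : IsOpen Ω := by
    rw [hΩeq]; exact isOpen_lt continuous_const hg_sm.continuous
  have hxcl : x ∈ closure Ω := frontier_subset_closure hx
  have hxU : x ∈ U := hUsub hxcl
  have hclg : ∀ z ∈ closure Ω, 0 ≤ g z := fun z hz =>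
    (closure_minimal (fun w hw => le_of_lt (by rw [hΩeq] at hw; exact hw))
      (isClosed_le continuous_const hg_sm.continuous)) hz
  have hclh : ∀ z ∈ closure Ω', 0 ≤ h z := fun z hz =>
    (closure_minimal (fun w hw => le_of_lt (by rw [hΩ'eq] at hw; exact hw))
      (isClosed_le continuous_const hh_sm.continuous)) hz
  have hxnot : x ∉ Ω := fun hm => hx.2 (by rwa [hΩopen.interior_eq])
  have hgx0 : g x = 0 := by
    have h1 : 0 ≤ g x := hclg x hxcl
    have h2 : ¬ 0 < g x := fun hlt => hxnot (by rw [hΩeq]; exact hlt)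
    linarith
  -- convexity of Ω
  have hΩconv : Convex ℝ Ω := by
    rw [hΩeq]
    intro z1 hz1 z2 hz2 a b ha hb hab
    have hz1' : 0 < g z1 := hz1
    have hz2' : 0 < g z2 := hz2
    set m := a • z1 + b • z2 with hm
    have e1 := htg m z1
    have e2 := htg m z2
    have hcomb : a • (z1 - m) + b • (z2 - m) = 0 := by
      rw [hm, show b = 1 - a by linarith]
      module
    have key : ⟪gradient g m, a • (z1 - m) + b • (z2 - m)⟫ = (0:ℝ) := by
      rw [hcomb, inner_zero_right]
    have expand : ⟪gradient g m, a • (z1 - m) + b • (z2 - m)⟫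
        = a * ⟪gradient g m, z1 - m⟫ + b * ⟪gradient g m, z2 - m⟫ := by
      rw [inner_add_right, real_inner_smul_right, real_inner_smul_right]
    have f1 := mul_le_mul_of_nonneg_left e1 ha
    have f2 := mul_le_mul_of_nonneg_left e2 hb
    have hgm1 : a * g m + b * g m = g m := by rw [← add_mul, hab, one_mul]
    have hsum : a * g z1 + b * g z2 ≤ g m := by
      nlinarith [f1, f2, key, expand, hgm1]
    have hposm : 0 < a * g z1 + b * g z2 := by
      rcases ha.lt_or_eq with ha' | ha'
      · nlinarith [mul_pos ha' hz1', mul_nonneg hb hz2'.le]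
      · have hb' : 0 < b := by linarith
        nlinarith [mul_pos hb' hz2']
    show 0 < g m
    linarith
  have hclconv : Convex ℝ (closure Ω) := hΩconv.closure
  -- smoothness of ∇u
  have hgu : ContDiffOn ℝ (⊤ : ℕ∞) (gradient u) U := my_contDiffOn_gradient hUopen huU
  have hguD : ∀ z ∈ U, DifferentiableAt ℝ (gradient u) z := fun z hz =>
    (hgu.contDiffAt (hUopen.mem_nhds hz)).differentiableAt (by simp)
  set y := gradient u x with hy
  have hycl : y ∈ closure Ω' := by
    have hcx : ContinuousWithinAt (gradient u) Ω x :=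
      (hgu.continuousOn.continuousAt (hUopen.mem_nhds hxU)).continuousWithinAt
    exact closure_mono (hbij.mapsTo.image_subset) (hcx.mem_closure_image hxcl)
  have hhy_nonneg : 0 ≤ h y := hclh y hycl
  -- `y ∉ Ω'` by strict monotonicity of `∇u` along segments
  have hynot : y ∉ Ω' := by
    intro hyΩ'
    obtain ⟨z, hzΩ, hzy⟩ := hbij.surjOn hyΩ'
    have hzx : z ≠ x := fun e => hxnot (e ▸ hzΩ)
    set w : EuclideanSpace ℝ (Fin n) := z - x with hw
    have hw0 : w ≠ 0 := sub_ne_zero.2 hzx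
    have hzcl : z ∈ closure Ω := subset_closure hzΩ
    have hmem : ∀ t ∈ Icc (0:ℝ) 1, x + t • w ∈ closure Ω := by
      intro t ht
      have hmemconv := hclconv hxcl hzcl (by linarith [ht.2] : (0:ℝ) ≤ 1 - t) ht.1 (by ring)
      have e : x + t • w = (1 - t) • x + t • z := by rw [hw]; module
      rw [e]; exact hmemconv
    set ψ : ℝ → ℝ := fun t => ⟪w, gradient u (x + t • w)⟫ with hψdef
    have hψ : ∀ t ∈ Icc (0:ℝ) 1,
        HasDerivAt ψ ⟪w, fderiv ℝ (gradient u) (x + t • w) w⟫ t := by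
      intro t ht
      have h1 : HasDerivAt (fun s : ℝ => gradient u (x + s • w))
          (fderiv ℝ (gradient u) (x + t • w) w) t :=
        my_line_hasDerivAt x w t (hguD _ (hUsub (hmem t ht)))
      exact ((innerSL ℝ w).hasFDerivAt.comp_hasDerivAt t h1)
    obtain ⟨c, hcIoo, hceq⟩ := exists_hasDerivAt_eq_slope ψ
      (fun t => ⟪w, fderiv ℝ (gradient u) (x + t • w) w⟫) one_pos
      (fun t ht => (hψ t ht).continuousAt.continuousWithinAt)
      (fun t ht => hψ t ⟨ht.1.le, ht.2.le⟩)
    have hψ1 : ψ 1 = ⟪w, y⟫ := by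
      show ⟪w, gradient u (x + (1:ℝ) • w)⟫ = _
      have e : x + (1:ℝ) • w = z := by rw [hw]; module
      rw [e, hzy]
    have hψ0 : ψ 0 = ⟪w, y⟫ := by
      show ⟪w, gradient u (x + (0:ℝ) • w)⟫ = _
      have e : x + (0:ℝ) • w = x := by module
      rw [e, ← hy]
    have hcmem : x + c • w ∈ closure Ω := hmem c ⟨hcIoo.1.le, hcIoo.2.le⟩
    have hpos' := hpos _ hcmem w hw0
    rw [hψ1, hψ0] at hceq
    simp only [sub_self, sub_zero, zero_div] at hceq
    linarith
  have hhy0 : h y = 0 := by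
    refine le_antisymm ?_ hhy_nonneg
    by_contra hcon
    push_neg at hcon
    exact hynot (by rw [hΩ'eq]; exact hcon)
  set β : EuclideanSpace ℝ (Fin n) := gradient h y with hβdef
  set ν : EuclideanSpace ℝ (Fin n) := gradient g x with hνdef
  by_cases hβ : β = 0
  · rw [hβ]; simp
  · set A := fderiv ℝ (gradient u) x with hA
    have hνnorm : ‖ν‖ = 1 := hgnorm x hx
    have hνν : ⟪ν, ν⟫ = (1:ℝ) := by
      rw [real_inner_self_eq_norm_sq, hνnorm]; norm_num
    -- key halfspace inequality
    have H : ∀ d : EuclideanSpace ℝ (Fin n), 0 < ⟪ν, d⟫ → 0 ≤ ⟪β, A d⟫ := by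
      intro d hd
      have e0 : x + (0:ℝ) • d = x := by module
      have hγd : HasDerivAt (fun t : ℝ => g (x + t • d)) ⟪ν, d⟫ 0 := by
        have h1 := my_line_hasDerivAt (f := g) x d 0
          (hg_sm.differentiable (by simp) _)
        rw [e0] at h1
        rwa [← my_inner_grad, ← hνdef] at h1
      have hmemd : ∀ᶠ t in 𝓝[>] (0:ℝ), x + t • d ∈ Ω := by
        have hevp := my_eventually_pos hγd (by rw [e0]; exact hgx0) hd
        filter_upwards [hevp] with t ht
        rw [hΩeq]; exact ht
      have hψd : HasDerivAt (fun t : ℝ => ⟪β, gradient u (x + t • d)⟫) ⟪β, A d⟫ 0 := by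
        have h1 : HasDerivAt (fun s : ℝ => gradient u (x + s • d))
            (fderiv ℝ (gradient u) (x + (0:ℝ) • d) d) 0 :=
          my_line_hasDerivAt x d 0 (by rw [e0]; exact hguD _ hxU)
        rw [e0, ← hA] at h1
        simpa [Function.comp_def] using ((innerSL ℝ β).hasFDerivAt.comp_hasDerivAt 0 h1)
      apply my_deriv_nonneg hψd
      filter_upwards [hmemd] with t ht
      have hq : gradient u (x + t • d) ∈ Ω' := hbij.mapsTo ht
      have hq' : 0 < h (gradient u (x + t • d)) := by rw [hΩ'eq] at hq; exact hq
      have htangent := hth y (gradient u (x + t • d))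
      rw [hhy0] at htangent
      have hstep : 0 ≤ ⟪β, gradient u (x + t • d) - y⟫ := by
        rw [hβdef]; linarith
      rw [inner_sub_right] at hstep
      show ⟪β, gradient u (x + (0:ℝ) • d)⟫ ≤ ⟪β, gradient u (x + t • d)⟫
      rw [e0, ← hy]
      linarith
    have Hν : 0 ≤ ⟪β, A ν⟫ := H ν (by rw [hνν]; norm_num)
    have H' : ∀ d : EuclideanSpace ℝ (Fin n), 0 ≤ ⟪ν, d⟫ → 0 ≤ ⟪β, A d⟫ := by
      intro d hd
      refine le_of_forall_pos_le_add ?_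
      intro ε hε
      set δ : ℝ := ε / (⟪β, A ν⟫ + 1) with hδdef
      have hδ : 0 < δ := div_pos hε (by linarith)
      have h1 : 0 < ⟪ν, d + δ • ν⟫ := by
        rw [inner_add_right, real_inner_smul_right, hνν]
        nlinarith
      have h2 := H _ h1
      rw [A.map_add, A.map_smul, inner_add_right, inner_smul_right_eq_smul] at h2
      have h3 : δ * ⟪β, A ν⟫ ≤ ε := by
        rw [hδdef, div_mul_eq_mul_div, div_le_iff₀ (by linarith : (0:ℝ) < ⟪β, A ν⟫ + 1)]
        nlinarith
      simp only [smul_eq_mul] at h2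
      linarith
    set d0 : EuclideanSpace ℝ (Fin n) := β - ⟪ν, β⟫ • ν with hd0def
    have hd0 : ⟪ν, d0⟫ = 0 := by
      rw [hd0def, inner_sub_right, real_inner_smul_right, hνν]; ring
    have h4 : ⟪β, A d0⟫ = 0 := by
      have a1 := H' d0 hd0.ge
      have a2 := H' (-d0) (by rw [inner_neg_right, hd0]; norm_num)
      rw [A.map_neg, inner_neg_right] at a2
      linarith
    have hLβ : 0 < ⟪β, A β⟫ := hpos x hxcl β hβ
    have hdecomp : ⟪β, A β⟫ = ⟪ν, β⟫ * ⟪β, A ν⟫ := by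
      have hsplit : β = ⟪ν, β⟫ • ν + d0 := by rw [hd0def]; module
      calc ⟪β, A β⟫ = ⟪β, A (⟪ν, β⟫ • ν + d0)⟫ := by rw [← hsplit]
        _ = ⟪ν, β⟫ * ⟪β, A ν⟫ + ⟪β, A d0⟫ := by
            rw [A.map_add, A.map_smul, inner_add_right, inner_smul_right_eq_smul,
              smul_eq_mul]
        _ = ⟪ν, β⟫ * ⟪β, A ν⟫ := by rw [h4, add_zero]
    have hfin : 0 < ⟪ν, β⟫ := by nlinarith
    rw [real_inner_comm]
    exact hfin.le
end
end
end

section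
/- Let n ≥ 1, R₀ > 0 and t₀ ∈ (0, 1), and set c = n t₀/(√(1 − t₀²) R₀). Define u : ℝⁿ → ℝ by u(x) = (√(n² + c²|x|²) − n)/c. Then u is smooth, its gradient is ∇u(x) = c x/√(n² + c²|x|²) with |∇u(x)| < 1 for all x, the gradient map ∇u is a bijection (diffeomorphism) from the open ball B(0, R₀) onto the open ball B(0, t₀), and u satisfies the constant mean curvature equation ∑_{i=1}^n ∂_i(∂_i u/√(1 − |∇u|²))(x) = c for all x ∈ B(0, R₀). In particular, the second boundary value problem div(Du/√(1 − |Du|²)) = c in B(0, R₀) with Du(B(0, R₀)) = B(0, t₀) has a radially symmetric strictly convex solution. -/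
noncomputable section
open MeasureTheory
open scoped RealInnerProductSpace

set_option maxHeartbeats 1000000 in
/-- Lemma 6.1.  The explicit radially symmetric solution of the second
boundary value problem for the constant Lorentz mean curvature equation on balls. -/
theorem statement18 (n : ℕ) (hn : 1 ≤ n) (R₀ t₀ : ℝ) (hR : 0 < R₀)
    (ht : t₀ ∈ Set.Ioo (0 : ℝ) 1)
    (c : ℝ) (hc : c = (n : ℝ) * t₀ / (Real.sqrt (1 - t₀ ^ 2) * R₀))
    (u : EuclideanSpace ℝ (Fin n) → ℝ)
    (hu : ∀ x, u x = (Real.sqrt ((n : ℝ) ^ 2 + c ^ 2 * ‖x‖ ^ 2) - (n : ℝ)) / c) :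
    ContDiff ℝ (⊤ : ℕ∞) u ∧
    (∀ x, gradient u x = (c / Real.sqrt ((n : ℝ) ^ 2 + c ^ 2 * ‖x‖ ^ 2)) • x) ∧
    (∀ x, ‖gradient u x‖ < 1) ∧
    Set.BijOn (gradient u) (Metric.ball (0 : EuclideanSpace ℝ (Fin n)) R₀)
      (Metric.ball (0 : EuclideanSpace ℝ (Fin n)) t₀) ∧
    (∀ x ∈ Metric.ball (0 : EuclideanSpace ℝ (Fin n)) R₀, MOp n u x = c) := by
  obtain ⟨ht0, ht1⟩ := ht
  have hn1 : (1:ℝ) ≤ (n:ℝ) := by exact_mod_cast hn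
  have hnpos : (0:ℝ) < (n:ℝ) := by linarith
  have hs : 0 < Real.sqrt (1 - t₀ ^ 2) := Real.sqrt_pos.2 (by nlinarith)
  have hcpos : 0 < c := by
    rw [hc]; exact div_pos (mul_pos hnpos ht0) (mul_pos hs hR)
  have hQ : ∀ x : EuclideanSpace ℝ (Fin n), 0 < (n:ℝ) ^ 2 + c ^ 2 * ‖x‖ ^ 2 := by
    intro x
    have := mul_nonneg (sq_nonneg c) (sq_nonneg ‖x‖)
    nlinarith
  have hsqQ : ∀ x : EuclideanSpace ℝ (Fin n),
      0 < Real.sqrt ((n:ℝ) ^ 2 + c ^ 2 * ‖x‖ ^ 2) := fun x => Real.sqrt_pos.2 (hQ x)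
  have hueq : u = fun x => (Real.sqrt ((n:ℝ) ^ 2 + c ^ 2 * ‖x‖ ^ 2) - (n:ℝ)) / c :=
    funext hu
  -- smoothness
  have hsmooth : ContDiff ℝ (⊤ : ℕ∞) u := by
    rw [hueq]
    exact (((contDiff_const.add (contDiff_const.mul (contDiff_norm_sq ℝ))).sqrt
      (fun x => (hQ x).ne')).sub contDiff_const).div_const c
  -- gradient
  have hgrad : ∀ x : EuclideanSpace ℝ (Fin n),
      HasGradientAt u ((c / Real.sqrt ((n:ℝ) ^ 2 + c ^ 2 * ‖x‖ ^ 2)) • x) x := by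
    intro x
    have hQx := hQ x
    have hsq := hsqQ x
    have ha : HasDerivAt (fun s : ℝ => (n:ℝ) ^ 2 + c ^ 2 * s) (c ^ 2) (‖x‖ ^ 2) := by
      simpa using ((hasDerivAt_id (‖x‖ ^ 2)).const_mul (c ^ 2)).const_add ((n:ℝ) ^ 2)
    have hb : HasDerivAt Real.sqrt
        (1 / (2 * Real.sqrt ((n:ℝ) ^ 2 + c ^ 2 * ‖x‖ ^ 2)))
        ((n:ℝ) ^ 2 + c ^ 2 * ‖x‖ ^ 2) := Real.hasDerivAt_sqrt hQx.ne'
    have h1 : HasDerivAt (fun s : ℝ => (Real.sqrt ((n:ℝ) ^ 2 + c ^ 2 * s) - (n:ℝ)) / c)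
        (c / (2 * Real.sqrt ((n:ℝ) ^ 2 + c ^ 2 * ‖x‖ ^ 2))) (‖x‖ ^ 2) := by
      have h := ((hb.comp (‖x‖ ^ 2) ha).sub_const ((n:ℝ))).div_const c
      refine h.congr_deriv ?_
      field_simp
    have h2 : HasFDerivAt (fun y : EuclideanSpace ℝ (Fin n) => ‖y‖ ^ 2)
        (2 • (innerSL ℝ x)) x := (hasStrictFDerivAt_norm_sq x).hasFDerivAt
    have h3 := h1.comp_hasFDerivAt x h2
    rw [hasGradientAt_iff_hasFDerivAt]
    have hco : u = (fun s : ℝ => (Real.sqrt ((n:ℝ) ^ 2 + c ^ 2 * s) - (n:ℝ)) / c) ∘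
        (fun y : EuclideanSpace ℝ (Fin n) => ‖y‖ ^ 2) := by
      rw [hueq]; rfl
    rw [hco]
    refine h3.congr_fderiv ?_
    ext y
    simp only [InnerProductSpace.toDual_apply_apply, ContinuousLinearMap.smul_apply,
      ContinuousLinearMap.coe_smul', Pi.smul_apply, innerSL_apply_apply, smul_eq_mul,
      real_inner_smul_left]
    field_simp
    ring
  have hgrad' : ∀ x : EuclideanSpace ℝ (Fin n),
      gradient u x = (c / Real.sqrt ((n:ℝ) ^ 2 + c ^ 2 * ‖x‖ ^ 2)) • x :=
    fun x => (hgrad x).gradient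
  -- norm of the gradient
  have hnormg : ∀ x : EuclideanSpace ℝ (Fin n),
      ‖gradient u x‖ = c * ‖x‖ / Real.sqrt ((n:ℝ) ^ 2 + c ^ 2 * ‖x‖ ^ 2) := by
    intro x
    rw [hgrad' x, norm_smul, Real.norm_of_nonneg (by positivity)]
    ring
  have hcxlt : ∀ x : EuclideanSpace ℝ (Fin n),
      c * ‖x‖ < Real.sqrt ((n:ℝ) ^ 2 + c ^ 2 * ‖x‖ ^ 2) := by
    intro x
    have h0 : 0 ≤ c * ‖x‖ := by positivity
    have h := Real.sqrt_lt_sqrt (by positivity : (0:ℝ) ≤ (c * ‖x‖) ^ 2)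
      (by nlinarith : (c * ‖x‖) ^ 2 < (n:ℝ) ^ 2 + c ^ 2 * ‖x‖ ^ 2)
    rwa [Real.sqrt_sq h0] at h
  have hlt1 : ∀ x : EuclideanSpace ℝ (Fin n), ‖gradient u x‖ < 1 := by
    intro x
    rw [hnormg x, div_lt_one (hsqQ x)]
    exact hcxlt x
  -- key identity : √(1 - ‖∇u x‖²) = n / √Q
  have hden : ∀ x : EuclideanSpace ℝ (Fin n),
      Real.sqrt (1 - ‖gradient u x‖ ^ 2) =
        (n:ℝ) / Real.sqrt ((n:ℝ) ^ 2 + c ^ 2 * ‖x‖ ^ 2) := by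
    intro x
    have hQx := hQ x
    have hsq := hsqQ x
    have h1 : 1 - ‖gradient u x‖ ^ 2 = (n:ℝ) ^ 2 / ((n:ℝ) ^ 2 + c ^ 2 * ‖x‖ ^ 2) := by
      rw [hnormg x, div_pow, Real.sq_sqrt hQx.le]
      field_simp
      ring
    rw [h1, Real.sqrt_div (sq_nonneg _), Real.sqrt_sq hnpos.le]
  -- Bijectivity
  have hGleft : ∀ x : EuclideanSpace ℝ (Fin n),
      ((n:ℝ) / (c * Real.sqrt (1 - ‖gradient u x‖ ^ 2))) • gradient u x = x := by
    intro x
    rw [hden x, hgrad' x, smul_smul]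
    have hsq := hsqQ x
    have h : (n:ℝ) / (c * ((n:ℝ) / Real.sqrt ((n:ℝ) ^ 2 + c ^ 2 * ‖x‖ ^ 2))) *
        (c / Real.sqrt ((n:ℝ) ^ 2 + c ^ 2 * ‖x‖ ^ 2)) = 1 := by
      field_simp
    rw [h, one_smul]
  have hbij : Set.BijOn (gradient u) (Metric.ball (0 : EuclideanSpace ℝ (Fin n)) R₀)
      (Metric.ball (0 : EuclideanSpace ℝ (Fin n)) t₀) := by
    have h1t : (0:ℝ) < 1 - t₀ ^ 2 := by nlinarith
    have hs2 : Real.sqrt (1 - t₀ ^ 2) ^ 2 = 1 - t₀ ^ 2 := Real.sq_sqrt h1t.le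
    have hcmul : c * (Real.sqrt (1 - t₀ ^ 2) * R₀) = (n:ℝ) * t₀ := by
      rw [hc]; field_simp
    have hcRsq : c ^ 2 * R₀ ^ 2 * (1 - t₀ ^ 2) = (n:ℝ) ^ 2 * t₀ ^ 2 := by
      have h2 := congrArg (· ^ 2) hcmul
      simp only [mul_pow] at h2
      rw [hs2] at h2
      nlinarith [h2]
    refine ⟨?_, ?_, ?_⟩
    · -- maps to
      intro x hx
      rw [Metric.mem_ball, dist_zero_right] at hx ⊢
      rw [hnormg x, div_lt_iff₀ (hsqQ x)]
      have hk : (c * ‖x‖) ^ 2 < (t₀ * Real.sqrt ((n:ℝ) ^ 2 + c ^ 2 * ‖x‖ ^ 2)) ^ 2 := by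
        rw [mul_pow, mul_pow, Real.sq_sqrt (hQ x).le]
        have hx2 : ‖x‖ ^ 2 < R₀ ^ 2 := by nlinarith [norm_nonneg x]
        nlinarith [hcRsq, mul_lt_mul_of_pos_left hx2 (mul_pos (mul_pos hcpos hcpos) h1t)]
      have h0 : 0 ≤ c * ‖x‖ := by positivity
      have h1 : 0 < t₀ * Real.sqrt ((n:ℝ) ^ 2 + c ^ 2 * ‖x‖ ^ 2) :=
        mul_pos ht0 (hsqQ x)
      exact lt_of_pow_lt_pow_left₀ 2 h1.le hk
    · -- injective
      intro x hx y hy hxy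
      have := hGleft x
      rw [hxy] at this
      rw [← this, hGleft y]
    · -- surjective
      intro p hp
      rw [Metric.mem_ball, dist_zero_right] at hp
      have hp1 : ‖p‖ < 1 := lt_trans hp ht1
      have hp0 : (0:ℝ) ≤ ‖p‖ := norm_nonneg p
      have h1p : (0:ℝ) < 1 - ‖p‖ ^ 2 := by nlinarith
      have hsp : 0 < Real.sqrt (1 - ‖p‖ ^ 2) := Real.sqrt_pos.2 h1p
      have hsp2 : Real.sqrt (1 - ‖p‖ ^ 2) ^ 2 = 1 - ‖p‖ ^ 2 := Real.sq_sqrt h1p.le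
      set G : EuclideanSpace ℝ (Fin n) :=
        ((n:ℝ) / (c * Real.sqrt (1 - ‖p‖ ^ 2))) • p with hGdef
      have hGnorm : ‖G‖ = (n:ℝ) * ‖p‖ / (c * Real.sqrt (1 - ‖p‖ ^ 2)) := by
        rw [hGdef, norm_smul, Real.norm_of_nonneg (by positivity)]
        ring
      have hQG : (n:ℝ) ^ 2 + c ^ 2 * ‖G‖ ^ 2 = (n:ℝ) ^ 2 / (1 - ‖p‖ ^ 2) := by
        rw [hGnorm, div_pow, mul_pow, mul_pow, hsp2]
        field_simp
        ring
      have hsqQG : Real.sqrt ((n:ℝ) ^ 2 + c ^ 2 * ‖G‖ ^ 2) =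
          (n:ℝ) / Real.sqrt (1 - ‖p‖ ^ 2) := by
        rw [hQG, Real.sqrt_div (sq_nonneg _), Real.sqrt_sq hnpos.le]
      refine ⟨G, ?_, ?_⟩
      · rw [Metric.mem_ball, dist_zero_right, hGnorm, div_lt_iff₀ (by positivity)]
        -- n‖p‖ < R₀ c √(1-‖p‖²)
        have hkey : ((n:ℝ) * ‖p‖) ^ 2 < (R₀ * (c * Real.sqrt (1 - ‖p‖ ^ 2))) ^ 2 := by
          rw [mul_pow, mul_pow, mul_pow, hsp2]
          have hpt : ‖p‖ ^ 2 < t₀ ^ 2 := by nlinarith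
          nlinarith [hcRsq, mul_pos hnpos hnpos, mul_pos (mul_pos hR hR) (mul_pos hcpos hcpos)]
        have h0 : 0 ≤ (n:ℝ) * ‖p‖ := by positivity
        have h1 : 0 < R₀ * (c * Real.sqrt (1 - ‖p‖ ^ 2)) := by positivity
        exact lt_of_pow_lt_pow_left₀ 2 h1.le hkey
      · rw [hgrad' G, hsqQG, hGdef, smul_smul]
        have : c / ((n:ℝ) / Real.sqrt (1 - ‖p‖ ^ 2)) *
            ((n:ℝ) / (c * Real.sqrt (1 - ‖p‖ ^ 2))) = 1 := by
          field_simp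
        rw [this, one_smul]
  refine ⟨hsmooth, hgrad', hlt1, hbij, ?_⟩
  -- the PDE
  intro x _
  have hfun : ∀ i : Fin n, (fun y : EuclideanSpace ℝ (Fin n) =>
      fderiv ℝ u y (ev n i) / Real.sqrt (1 - ‖gradient u y‖ ^ 2)) =
      fun y => (c / (n:ℝ)) * y i := by
    intro i
    funext y
    have hfd : fderiv ℝ u y = InnerProductSpace.toDual ℝ _
        ((c / Real.sqrt ((n:ℝ) ^ 2 + c ^ 2 * ‖y‖ ^ 2)) • y) :=
      (hgrad y).hasFDerivAt.fderiv
    rw [hfd, hden y]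
    have hsq := hsqQ y
    simp only [InnerProductSpace.toDual_apply_apply, real_inner_smul_left, ev,
      EuclideanSpace.inner_single_right, conj_trivial, one_mul, mul_one, PiLp.smul_apply, smul_eq_mul]
    field_simp
  have hfder : ∀ i : Fin n,
      fderiv ℝ (fun y : EuclideanSpace ℝ (Fin n) => (c / (n:ℝ)) * y i) x (ev n i) =
        c / (n:ℝ) := by
    intro i
    have h : HasFDerivAt (fun y : EuclideanSpace ℝ (Fin n) => (c / (n:ℝ)) * y i)
        ((c / (n:ℝ)) • (EuclideanSpace.proj i : EuclideanSpace ℝ (Fin n) →L[ℝ] ℝ)) x := by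
      exact ((EuclideanSpace.proj i :
        EuclideanSpace ℝ (Fin n) →L[ℝ] ℝ).hasFDerivAt (x := x)).const_mul (c / (n:ℝ))
    rw [h.fderiv]
    simp [ev, EuclideanSpace.single_apply]
  unfold MOp
  calc (∑ i : Fin n, fderiv ℝ (fun y => fderiv ℝ u y (ev n i) /
          Real.sqrt (1 - ‖gradient u y‖ ^ 2)) x (ev n i))
      = ∑ i : Fin n, (c / (n:ℝ)) := by
        refine Finset.sum_congr rfl fun i _ => ?_
        rw [hfun i, hfder i]
    _ = c := by
        rw [Finset.sum_const, Finset.card_univ, Fintype.card_fin, nsmul_eq_mul]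
        field_simp
end
end
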